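/- For every natural number n ≥ 1: for each i with 1 ≤ i ≤ n−1, the number of hub vertices of G_n whose degree in G_n equals 2^{i+1} − 2 is exactly 2·3^{n−1−i}; moreover the root r_n is the unique hub vertex of degree 2^{n+1} − 2, and every hub vertex of G_n has degree 2^{i+1} − 2 for some i with 1 ≤ i ≤ n. -/

import Mathlib

namespace DSFN

/-- Vertex set of the `n`-th generation graph `G n` of the Barabási–Ravasz–Vicsek
deterministic scale-free network: `Fin n → Fin 3`, which is canonically
`{0,1,2} × V(G (n-1))` (first coordinate = which of the three copies). -/
abbrev Vert (n : ℕ) : Type := Fin n → Fin 3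

/-- The root of `G n`: the all-zero vertex. -/
def root (n : ℕ) : Vert n := fun _ => 0

/-- The leaf set of `G n`: recursively, leaves of `G n` are the vertices `(t, ℓ)` with
`t ∈ {1,2}` and `ℓ` a leaf of `G (n-1)`; equivalently all coordinates are nonzero. -/
def IsLeaf {n : ℕ} (v : Vert n) : Prop := ∀ i, v i ≠ 0

/-- The hub vertices of `G n`: the unique hub of `G 1` is the root `0`, and the hubs of
`G n` are the vertices `(t, h)` with `h` a hub of `G (n-1)`; equivalently the last
coordinate vanishes. All other vertices are rim vertices. -/
def IsHub {n : ℕ} (v : Vert n) : Prop := ∀ i : Fin n, (i : ℕ) + 1 = n → v i = 0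

/-- Adjacency in `G n` : each of the three copies of `G (n-1)` is an induced subgraph,
and in addition the root is joined to every vertex `(t, ℓ)` with `t ∈ {1,2}` and
`ℓ` a leaf of `G (n-1)`. -/
def Adj : (n : ℕ) → Vert n → Vert n → Prop
  | 0 => fun _ _ => False
  | n + 1 => fun u v =>
      (u 0 = v 0 ∧ Adj n (Fin.tail u) (Fin.tail v)) ∨
      (u = root (n + 1) ∧ (v 0 = 1 ∨ v 0 = 2) ∧ IsLeaf (Fin.tail v)) ∨
      (v = root (n + 1) ∧ (u 0 = 1 ∨ u 0 = 2) ∧ IsLeaf (Fin.tail u))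

instance instDecIsLeaf {n : ℕ} : DecidablePred (IsLeaf (n := n)) := fun v =>
  inferInstanceAs (Decidable (∀ i, v i ≠ 0))

instance instDecIsHub {n : ℕ} : DecidablePred (IsHub (n := n)) := fun v =>
  inferInstanceAs (Decidable (∀ i : Fin n, (i : ℕ) + 1 = n → v i = 0))

instance instDecAdj : (n : ℕ) → DecidableRel (Adj n)
  | 0 => fun _ _ => inferInstanceAs (Decidable False)
  | n + 1 => fun u v =>
      letI := instDecAdj n
      inferInstanceAs (Decidable
        ((u 0 = v 0 ∧ Adj n (Fin.tail u) (Fin.tail v)) ∨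
        (u = root (n + 1) ∧ (v 0 = 1 ∨ v 0 = 2) ∧ IsLeaf (Fin.tail v)) ∨
        (v = root (n + 1) ∧ (u 0 = 1 ∨ u 0 = 2) ∧ IsLeaf (Fin.tail u))))

theorem adj_symm : ∀ (n : ℕ) (u v : Vert n), Adj n u v → Adj n v u
  | 0, _, _, h => h.elim
  | n + 1, _, _, h =>
      h.elim (fun h1 => Or.inl ⟨h1.1.symm, adj_symm n _ _ h1.2⟩)
        (fun h2 => h2.elim (fun a => Or.inr (Or.inr a)) (fun a => Or.inr (Or.inl a)))

theorem adj_irrefl : (n : ℕ) → ∀ v : Vert n, ¬ Adj n v v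
  | 0 => fun _ h => h
  | n + 1 => by
      intro v h
      rcases h with ⟨-, h2⟩ | ⟨h1, h2, -⟩ | ⟨h1, h2, -⟩
      · exact adj_irrefl n (Fin.tail v) h2
      · rw [h1] at h2
        exact h2.elim (fun c => absurd c (by simp [root])) (fun c => absurd c (by simp [root]))
      · rw [h1] at h2
        exact h2.elim (fun c => absurd c (by simp [root])) (fun c => absurd c (by simp [root]))

/-- The `n`-th generation of the Barabási–Ravasz–Vicsek deterministic scale-free
network, as a simple graph (for `n ≥ 1`; `G 0` is the trivial one-vertex graph). -/
def G (n : ℕ) : SimpleGraph (Vert n) where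
  Adj := Adj n
  symm := ⟨fun u v h => adj_symm n u v h⟩
  loopless := ⟨fun v h => adj_irrefl n v h⟩

instance (n : ℕ) : DecidableRel (G n).Adj := instDecAdj n

end DSFN
open DSFN Finset

lemma adj_succ_iff {n : ℕ} (u v : Vert (n+1)) : Adj (n+1) u v ↔
    ((u 0 = v 0 ∧ Adj n (Fin.tail u) (Fin.tail v)) ∨
      (u = root (n + 1) ∧ (v 0 = 1 ∨ v 0 = 2) ∧ IsLeaf (Fin.tail v)) ∨
      (v = root (n + 1) ∧ (u 0 = 1 ∨ u 0 = 2) ∧ IsLeaf (Fin.tail u))) := Iff.rfl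

lemma tail_root (n : ℕ) : Fin.tail (root (n+1)) = root n := rfl

lemma cons_root (n : ℕ) : (Fin.cons 0 (root n) : Vert (n+1)) = root (n+1) := by
  funext i
  refine Fin.cases ?_ ?_ i <;> simp [root]

lemma eq_root_iff {n : ℕ} (v : Vert (n+1)) :
    v = root (n+1) ↔ v 0 = 0 ∧ Fin.tail v = root n := by
  constructor
  · rintro rfl; exact ⟨rfl, rfl⟩
  · rintro ⟨h0, ht⟩
    rw [← Fin.cons_self_tail v, h0, ht, cons_root]

lemma isHub_succ_iff {n : ℕ} (v : Vert (n+1)) : IsHub v ↔ v (Fin.last n) = 0 := by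
  constructor
  · intro h; exact h (Fin.last n) (by simp)
  · intro h i hi
    have : i = Fin.last n := Fin.ext (by simpa using hi)
    rwa [this]

lemma isHub_tail_iff {n : ℕ} (v : Vert (n+2)) : IsHub v ↔ IsHub (Fin.tail v) := by
  rw [isHub_succ_iff, isHub_succ_iff]
  have : Fin.tail v (Fin.last n) = v (Fin.last (n+1)) := by
    rw [Fin.tail]; congr 1
  rw [this]

lemma root_isHub (n : ℕ) : IsHub (root n) := fun _ _ => rfl

lemma hub_not_leaf {n : ℕ} (v : Vert (n+1)) (h : IsHub v) : ¬ IsLeaf v := by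
  intro hl
  exact hl (Fin.last n) ((isHub_succ_iff v).mp h)

lemma pow_sub_lt {a b : ℕ} (h : a < b) : (2:ℕ)^(a+1) - 2 < 2^(b+1) - 2 := by
  have h1 : (2:ℕ)^(a+1) < 2^(b+1) := Nat.pow_lt_pow_right one_lt_two (by omega)
  have h2 : (2:ℕ)^1 ≤ 2^(a+1) := Nat.pow_le_pow_right (by norm_num) (by omega)
  simp at h2; omega

lemma leaf_card (n : ℕ) : (univ.filter (fun v : Vert n => IsLeaf v)).card = 2 ^ n := by
  rw [← Fintype.card_subtype]
  have e : {x : Vert n // IsLeaf x} ≃ (Fin n → {x : Fin 3 // x ≠ 0}) :=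
    (Equiv.subtypeEquivRight (p := IsLeaf) (q := fun v : Vert n => ∀ i, v i ≠ 0)
      (fun _ => Iff.rfl)).trans
      (Equiv.subtypePiEquivPi (p := fun (_ : Fin n) (x : Fin 3) => x ≠ 0))
  rw [Fintype.card_congr e]
  simp [Fintype.card_pi]
lemma degree_G0 (v : Vert 0) : (G 0).degree v = 0 := by
  rw [SimpleGraph.degree, Finset.card_eq_zero, Finset.eq_empty_iff_forall_notMem]
  intro w hw
  exact ((G 0).mem_neighborFinset v w).mp hw

lemma degree_eq_tail {n : ℕ} (v : Vert (n+1)) (h1 : v ≠ root (n+1))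
    (h2 : ¬ IsLeaf (Fin.tail v)) :
    (G (n+1)).degree v = (G n).degree (Fin.tail v) := by
  have key : ∀ w : Vert (n+1), (G (n+1)).Adj v w ↔
      (v 0 = w 0 ∧ Adj n (Fin.tail v) (Fin.tail w)) := by
    intro w
    constructor
    · intro h
      rcases h with h | ⟨hr, _⟩ | ⟨_, _, hl⟩
      · exact h
      · exact absurd hr h1
      · exact absurd hl h2
    · exact fun h => Or.inl h
  rw [SimpleGraph.degree, SimpleGraph.degree]
  refine Finset.card_nbij' (fun w => Fin.tail w) (fun u => Fin.cons (v 0) u) ?_ ?_ ?_ ?_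
  · intro w hw
    rw [Finset.mem_coe, SimpleGraph.mem_neighborFinset] at hw ⊢
    exact ((key w).mp hw).2
  · intro u hu
    rw [Finset.mem_coe, SimpleGraph.mem_neighborFinset] at hu ⊢
    refine (key _).mpr ⟨?_, ?_⟩
    · dsimp only; rw [Fin.cons_zero]
    · dsimp only; rwa [Fin.tail_cons]
  · intro w hw
    rw [Finset.mem_coe, SimpleGraph.mem_neighborFinset] at hw
    dsimp only
    rw [((key w).mp hw).1, Fin.cons_self_tail]
  · intro u _
    dsimp only
    exact Fin.tail_cons _ _

lemma degree_root_succ (n : ℕ) :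
    (G (n+1)).degree (root (n+1)) = (G n).degree (root n) + 2 ^ (n+1) := by
  have h00 : (root (n+1)) 0 = 0 := rfl
  have key : ∀ w : Vert (n+1), (G (n+1)).Adj (root (n+1)) w ↔
      ((w 0 = 0 ∧ Adj n (root n) (Fin.tail w)) ∨
        ((w 0 = 1 ∨ w 0 = 2) ∧ IsLeaf (Fin.tail w))) := by
    intro w
    constructor
    · intro h
      rcases h with ⟨he, ha⟩ | ⟨_, hc, hl⟩ | ⟨_, hc, _⟩
      · exact Or.inl ⟨he.symm, ha⟩
      · exact Or.inr ⟨hc, hl⟩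
      · rw [h00] at hc
        rcases hc with hc | hc <;> exact absurd hc (by decide)
    · intro h
      rcases h with ⟨he, ha⟩ | ⟨hc, hl⟩
      · exact Or.inl ⟨he.symm, ha⟩
      · exact Or.inr (Or.inl ⟨rfl, hc, hl⟩)
  have hset : (G (n+1)).neighborFinset (root (n+1)) =
      (Finset.univ.filter fun w : Vert (n+1) => w 0 = 0 ∧ Adj n (root n) (Fin.tail w)) ∪
      (Finset.univ.filter fun w : Vert (n+1) => (w 0 = 1 ∨ w 0 = 2) ∧ IsLeaf (Fin.tail w)) := by
    ext w
    rw [SimpleGraph.mem_neighborFinset, key, Finset.mem_union, Finset.mem_filter,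
      Finset.mem_filter]
    simp
  have hdisj : Disjoint
      (Finset.univ.filter fun w : Vert (n+1) => w 0 = 0 ∧ Adj n (root n) (Fin.tail w))
      (Finset.univ.filter fun w : Vert (n+1) => (w 0 = 1 ∨ w 0 = 2) ∧ IsLeaf (Fin.tail w)) := by
    rw [Finset.disjoint_left]
    intro w hw hw'
    rw [Finset.mem_filter] at hw hw'
    rcases hw'.2.1 with h | h <;> rw [hw.2.1] at h <;> exact absurd h (by decide)
  have c1 : (Finset.univ.filter fun w : Vert (n+1) =>
      w 0 = 0 ∧ Adj n (root n) (Fin.tail w)).card = (G n).degree (root n) := by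
    rw [SimpleGraph.degree]
    refine Finset.card_nbij' (fun w => Fin.tail w) (fun u => Fin.cons 0 u) ?_ ?_ ?_ ?_
    · intro w hw
      rw [Finset.mem_coe, Finset.mem_filter] at hw
      rw [Finset.mem_coe, SimpleGraph.mem_neighborFinset]
      exact hw.2.2
    · intro u hu
      rw [Finset.mem_coe, SimpleGraph.mem_neighborFinset] at hu
      rw [Finset.mem_coe, Finset.mem_filter]
      exact ⟨Finset.mem_univ _, Fin.cons_zero _ _, by rwa [Fin.tail_cons]⟩
    · intro w hw
      rw [Finset.mem_coe, Finset.mem_filter] at hw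
      dsimp only
      rw [← hw.2.1, Fin.cons_self_tail]
    · intro u _
      dsimp only
      exact Fin.tail_cons _ _
  have c2 : (Finset.univ.filter fun w : Vert (n+1) =>
      (w 0 = 1 ∨ w 0 = 2) ∧ IsLeaf (Fin.tail w)).card = 2 ^ (n+1) := by
    have : (Finset.univ.filter fun w : Vert (n+1) =>
        (w 0 = 1 ∨ w 0 = 2) ∧ IsLeaf (Fin.tail w)).card =
        (({1, 2} : Finset (Fin 3)) ×ˢ
          (Finset.univ.filter fun u : Vert n => IsLeaf u)).card := by
      refine Finset.card_nbij' (fun w => (w 0, Fin.tail w)) (fun p => Fin.cons p.1 p.2)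
        ?_ ?_ ?_ ?_
      · intro w hw
        rw [Finset.mem_coe, Finset.mem_filter] at hw
        rw [Finset.mem_coe, Finset.mem_product, Finset.mem_filter]
        refine ⟨?_, Finset.mem_univ _, hw.2.2⟩
        rcases hw.2.1 with h | h <;> simp [h]
      · intro p hp
        rw [Finset.mem_coe, Finset.mem_product, Finset.mem_filter] at hp
        rw [Finset.mem_coe, Finset.mem_filter]
        have h1 : p.1 = 1 ∨ p.1 = 2 := by
          have := hp.1; simp at this; tauto
        refine ⟨Finset.mem_univ _, ?_, ?_⟩
        · dsimp only; rw [Fin.cons_zero]; exact h1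
        · dsimp only; rw [Fin.tail_cons]; exact hp.2.2
      · intro w _
        dsimp only
        exact Fin.cons_self_tail w
      · intro p _
        simp
    rw [this, Finset.card_product, leaf_card]
    have : ({1, 2} : Finset (Fin 3)).card = 2 := by decide
    rw [this, pow_succ, Nat.mul_comm]
  rw [SimpleGraph.degree, hset, Finset.card_union_of_disjoint hdisj, c1, c2]

lemma degree_root : ∀ n : ℕ, 1 ≤ n → (G n).degree (root n) = 2 ^ (n+1) - 2 := by
  intro n
  induction n with
  | zero => intro h; omega
  | succ m ih =>
    intro _
    rcases Nat.eq_zero_or_pos m with rfl | hm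
    · rw [degree_root_succ, degree_G0]; norm_num
    · rw [degree_root_succ, ih hm]
      have h2 : (2:ℕ) ≤ 2 ^ (m+1) := by
        calc (2:ℕ) = 2 ^ 1 := rfl
        _ ≤ 2 ^ (m+1) := Nat.pow_le_pow_right (by norm_num) (by omega)
      have h3 : (2:ℕ) ^ (m+1+1) = 2 * 2 ^ (m+1) := by ring
      omega
lemma fin3_cases (x : Fin 3) : x = 0 ∨ x = 1 ∨ x = 2 := by
  fin_cases x <;> simp

lemma main_induction : ∀ n : ℕ,
    (∀ v : Vert (n+1), IsHub v → v ≠ root (n+1) →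
      ∃ i, 1 ≤ i ∧ i + 1 ≤ n + 1 ∧ (G (n+1)).degree v = 2^(i+1) - 2) ∧
    (∀ i, 1 ≤ i → i + 1 ≤ n + 1 →
      (Finset.univ.filter
        (fun v : Vert (n+1) => IsHub v ∧ (G (n+1)).degree v = 2^(i+1) - 2)).card
          = 2 * 3 ^ (n - i)) := by
  intro n
  induction n with
  | zero =>
    constructor
    · intro v hv hne
      exfalso
      apply hne
      funext i
      have hi : i = 0 := Fin.ext (by omega)
      rw [hi]
      exact hv 0 rfl
    · intro i h1 h2; omega
  | succ n ih =>
    obtain ⟨ih1, ih2⟩ := ih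
    -- degree of a non-root hub equals degree of its tail
    have hdegt : ∀ w : Vert (n+2), IsHub w → w ≠ root (n+2) →
        (G (n+2)).degree w = (G (n+1)).degree (Fin.tail w) := by
      intro w hw hne
      exact degree_eq_tail w hne (hub_not_leaf _ ((isHub_tail_iff w).mp hw))
    have hrootdeg : (G (n+2)).degree (root (n+2)) = 2 ^ (n+3) - 2 :=
      degree_root (n+2) (by omega)
    have h1rootdeg : (G (n+1)).degree (root (n+1)) = 2 ^ (n+2) - 2 :=
      degree_root (n+1) (by omega)
    have bullet1 : ∀ v : Vert (n+2), IsHub v → v ≠ root (n+2) →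
        ∃ i, 1 ≤ i ∧ i + 1 ≤ n + 2 ∧ (G (n+2)).degree v = 2^(i+1) - 2 := by
      intro v hv hne
      have htail : IsHub (Fin.tail v) := (isHub_tail_iff v).mp hv
      have hdeg := hdegt v hv hne
      by_cases hr : Fin.tail v = root (n+1)
      · exact ⟨n+1, by omega, by omega, by rw [hdeg, hr, h1rootdeg]⟩
      · obtain ⟨i, g1, g2, g3⟩ := ih1 (Fin.tail v) htail hr
        exact ⟨i, g1, by omega, by rw [hdeg, g3]⟩
    refine ⟨bullet1, ?_⟩
    intro i hi1 hi2
    rcases Nat.lt_or_ge i (n+1) with hle | hge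
    · -- i ≤ n : three copies of level-(n+1) hubs
      have hkey : ∀ w : Vert (n+2),
          (IsHub w ∧ (G (n+2)).degree w = 2^(i+1) - 2) ↔
          (IsHub (Fin.tail w) ∧ (G (n+1)).degree (Fin.tail w) = 2^(i+1) - 2) := by
        intro w
        constructor
        · rintro ⟨hw, hd⟩
          have hne : w ≠ root (n+2) := by
            rintro rfl
            rw [hrootdeg] at hd
            exact absurd hd.symm (Nat.ne_of_lt (pow_sub_lt (show i < n+2 by omega)))
          exact ⟨(isHub_tail_iff w).mp hw, by rw [← hdegt w hw hne, hd]⟩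
        · rintro ⟨hw, hd⟩
          have hwt : IsHub w := (isHub_tail_iff w).mpr hw
          have hne : w ≠ root (n+2) := by
            rintro rfl
            rw [tail_root, h1rootdeg] at hd
            exact absurd hd.symm (Nat.ne_of_lt (pow_sub_lt (show i < n+1 by omega)))
          exact ⟨hwt, by rw [hdegt w hwt hne, hd]⟩
      have hcard : (Finset.univ.filter
          (fun v : Vert (n+2) => IsHub v ∧ (G (n+2)).degree v = 2^(i+1) - 2)).card =
          ((Finset.univ : Finset (Fin 3)) ×ˢ (Finset.univ.filter
            (fun u : Vert (n+1) => IsHub u ∧ (G (n+1)).degree u = 2^(i+1) - 2))).card := by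
        refine Finset.card_nbij' (fun w => (w 0, Fin.tail w)) (fun p => Fin.cons p.1 p.2)
          ?_ ?_ ?_ ?_
        · intro w hw
          rw [Finset.mem_coe, Finset.mem_filter] at hw
          rw [Finset.mem_coe, Finset.mem_product, Finset.mem_filter]
          exact ⟨Finset.mem_univ _, Finset.mem_univ _, (hkey w).mp hw.2⟩
        · intro p hp
          rw [Finset.mem_coe, Finset.mem_product, Finset.mem_filter] at hp
          rw [Finset.mem_coe, Finset.mem_filter]
          refine ⟨Finset.mem_univ _, (hkey _).mpr ?_⟩
          dsimp only
          rw [Fin.tail_cons]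
          exact hp.2.2
        · intro w _
          dsimp only
          exact Fin.cons_self_tail w
        · intro p _
          simp
      rw [hcard, Finset.card_product, ih2 i hi1 (by omega)]
      have hexp : n + 1 - i = (n - i) + 1 := by omega
      rw [hexp, pow_succ]
      have : (Finset.univ : Finset (Fin 3)).card = 3 := by decide
      rw [this]
      ring
    · -- i = n + 1
      have hieq : i = n + 1 := by omega
      subst hieq
      have hkey : ∀ w : Vert (n+2),
          (IsHub w ∧ (G (n+2)).degree w = 2^(n+2) - 2) ↔
          ((w 0 = 1 ∨ w 0 = 2) ∧ Fin.tail w = root (n+1)) := by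
        intro w
        constructor
        · rintro ⟨hw, hd⟩
          have hne : w ≠ root (n+2) := by
            rintro rfl
            rw [hrootdeg] at hd
            exact absurd hd.symm (Nat.ne_of_lt (pow_sub_lt (show n+1 < n+2 by omega)))
          have htail : IsHub (Fin.tail w) := (isHub_tail_iff w).mp hw
          have hr : Fin.tail w = root (n+1) := by
            by_contra hr
            obtain ⟨j, g1, g2, g3⟩ := ih1 (Fin.tail w) htail hr
            rw [hdegt w hw hne, g3] at hd
            exact absurd hd (Nat.ne_of_lt (pow_sub_lt (show j < n+1 by omega)))
          have h0 : w 0 ≠ 0 := by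
            intro h0
            exact hne ((eq_root_iff w).mpr ⟨h0, hr⟩)
          rcases fin3_cases (w 0) with h | h | h
          · exact absurd h h0
          · exact ⟨Or.inl h, hr⟩
          · exact ⟨Or.inr h, hr⟩
        · rintro ⟨h0, hr⟩
          have hwt : IsHub w := (isHub_tail_iff w).mpr (hr ▸ root_isHub (n+1))
          have hne : w ≠ root (n+2) := by
            intro h
            have := ((eq_root_iff w).mp h).1
            rcases h0 with h0 | h0 <;> rw [h0] at this <;> exact absurd this (by decide)
          refine ⟨hwt, ?_⟩
          rw [hdegt w hwt hne, hr, h1rootdeg]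
      have hcard : (Finset.univ.filter
          (fun v : Vert (n+2) => IsHub v ∧ (G (n+2)).degree v = 2^(n+2) - 2)).card =
          ({1, 2} : Finset (Fin 3)).card := by
        refine Finset.card_nbij' (fun w => w 0) (fun t => Fin.cons t (root (n+1)))
          ?_ ?_ ?_ ?_
        · intro w hw
          rw [Finset.mem_coe, Finset.mem_filter] at hw
          have := ((hkey w).mp hw.2).1
          simp only [Finset.mem_coe, Finset.mem_insert, Finset.mem_singleton]
          exact this
        · intro t ht
          simp only [Finset.mem_coe, Finset.mem_insert, Finset.mem_singleton] at ht
          rw [Finset.mem_coe, Finset.mem_filter]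
          refine ⟨Finset.mem_univ _, (hkey _).mpr ⟨?_, ?_⟩⟩
          · dsimp only; rw [Fin.cons_zero]; exact ht
          · dsimp only; rw [Fin.tail_cons]
        · intro w hw
          rw [Finset.mem_coe, Finset.mem_filter] at hw
          have hr := ((hkey w).mp hw.2).2
          dsimp only
          rw [← hr, Fin.cons_self_tail]
        · intro t _
          dsimp only
          rw [Fin.cons_zero]
      rw [hcard]
      have : ({1, 2} : Finset (Fin 3)).card = 2 := by decide
      rw [this]
      have : n + 1 - (n + 1) = 0 := by omega
      rw [this]
      ring
open DSFN in
/-- For every `n ≥ 1`: for each `1 ≤ i ≤ n - 1` the number of hub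
vertices of `G n` of degree `2 ^ (i+1) - 2` is exactly `2 * 3 ^ (n-1-i)`; the root is
the unique hub vertex of degree `2 ^ (n+1) - 2`; and every hub vertex has degree
`2 ^ (i+1) - 2` for some `1 ≤ i ≤ n`. -/
theorem dsfn_hub_degree_distribution (n : ℕ) (hn : 1 ≤ n) :
    (∀ i : ℕ, 1 ≤ i → i ≤ n - 1 →
      (Finset.univ.filter
        (fun v : Vert n => IsHub v ∧ (G n).degree v = 2 ^ (i + 1) - 2)).card
        = 2 * 3 ^ (n - 1 - i)) ∧
    (Finset.univ.filter
        (fun v : Vert n => IsHub v ∧ (G n).degree v = 2 ^ (n + 1) - 2)) = {root n} ∧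
    (∀ v : Vert n, IsHub v →
      ∃ i : ℕ, 1 ≤ i ∧ i ≤ n ∧ (G n).degree v = 2 ^ (i + 1) - 2) := by
  obtain ⟨m, rfl⟩ : ∃ m, n = m + 1 := ⟨n - 1, by omega⟩
  obtain ⟨B1, B2⟩ := main_induction m
  refine ⟨?_, ?_, ?_⟩
  · intro i hi1 hi2
    have h2 : i + 1 ≤ m + 1 := by omega
    have := B2 i hi1 h2
    have hexp : m + 1 - 1 - i = m - i := by omega
    rw [hexp]
    exact this
  · ext v
    simp only [Finset.mem_filter, Finset.mem_univ, true_and, Finset.mem_singleton]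
    constructor
    · rintro ⟨hv, hd⟩
      by_contra hne
      obtain ⟨i, h1, h2, h3⟩ := B1 v hv hne
      rw [h3] at hd
      exact absurd hd (Nat.ne_of_lt (pow_sub_lt (show i < m + 1 by omega)))
    · rintro rfl
      exact ⟨root_isHub _, degree_root _ (by omega)⟩
  · intro v hv
    by_cases h : v = root (m + 1)
    · exact ⟨m + 1, by omega, le_refl _, by rw [h]; exact degree_root _ (by omega)⟩
    · obtain ⟨i, h1, h2, h3⟩ := B1 v hv h
      exact ⟨i, h1, by omega, h3⟩
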